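/- Let x be a compact operator on H, let i ≥ 1 be an index with p_i ≠ 0, and let q be an orthogonal projection with q p_i = 0. Then there exists an operator y of rank at most one with ‖y‖ ≤ 1 such that ‖x·P(y) − P(x·y)‖ ≥ ‖p_i x q‖. (In particular, applying this with q = p_j for j ≠ i or q = p_0, the norm of the commutator of left multiplication by x with the pinching P, as an operator on the compact operators, is at least ‖p_i x p_j‖ for every j ≥ 0 with j ≠ i.) -/

import Mathlib

open Metric Filter Topology InnerProductSpace NormedSpace

lemma compact_norm_attained {H : Type*} [NormedAddCommGroup H] [InnerProductSpace ℂ H]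
    [CompleteSpace H] (T : H →L[ℂ] H) (hT : IsCompactOperator ⇑T) :
    ∃ v : H, ‖v‖ ≤ 1 ∧ ‖T‖ ≤ ‖T v‖ := by
  have hseq : ∀ n : ℕ, ∃ v : H, ‖v‖ ≤ 1 ∧ ‖T‖ - 1/(n+1) < ‖T v‖ := by
    intro n
    have h : ‖T‖ - 1/(n+1) < ‖T‖ := by
      have : (0:ℝ) < 1/(n+1) := by positivity
      linarith
    obtain ⟨z, hz, hz2⟩ := T.exists_lt_apply_of_lt_opNorm h
    exact ⟨z, hz.le, hz2⟩
  choose v hv1 hv2 using hseq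
  have hlim : Tendsto (fun n => ‖T (v n)‖) atTop (𝓝 ‖T‖) := by
    refine tendsto_of_tendsto_of_tendsto_of_le_of_le (g := fun n : ℕ => ‖T‖ - 1/(n+1))
      (h := fun _ => ‖T‖) ?_ tendsto_const_nhds (fun n => (hv2 n).le)
      (fun n => (T.le_opNorm _).trans (by nlinarith [hv1 n, norm_nonneg (T (v n)), norm_nonneg T]))
    have h0 : Tendsto (fun n : ℕ => 1/((n:ℝ)+1)) atTop (𝓝 0) :=
      tendsto_one_div_add_atTop_nhds_zero_nat
    simpa using tendsto_const_nhds.sub h0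
  set 𝒰 : Ultrafilter ℕ := Ultrafilter.of atTop with h𝒰def
  have h𝒰 : (𝒰 : Filter ℕ) ≤ atTop := Ultrafilter.of_le _
  set D := InnerProductSpace.toDual ℂ H with hD
  -- weak limit point
  have hmem : (WeakDual.toStrongDual ⁻¹' closedBall 0 1 : Set (WeakDual ℂ H)) ∈
      Ultrafilter.map (fun n => (D (v n) : WeakDual ℂ H)) 𝒰 := by
    refine Ultrafilter.mem_map.2 (Filter.univ_mem' (fun m => ?_))
    change dist (WeakDual.toStrongDual (D (v m) : WeakDual ℂ H)) 0 ≤ 1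
    rw [dist_zero_right]
    show ‖(D (v m) : StrongDual ℂ H)‖ ≤ 1
    simpa using hv1 m
  obtain ⟨φ, hφmem, hφlim⟩ := (WeakDual.isCompact_closedBall (0 : StrongDual ℂ H) 1).ultrafilter_le_nhds
    (Ultrafilter.map (fun n => (D (v n) : WeakDual ℂ H)) 𝒰) (le_principal_iff.2 hmem)
  set w0 : H := D.symm (WeakDual.toStrongDual φ) with hw0
  have hw0norm : ‖w0‖ ≤ 1 := by
    have h1 := hφmem
    simp only [Set.mem_preimage, mem_closedBall, dist_zero_right] at h1
    simpa [hw0] using h1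
  have hweak : ∀ z : H, Tendsto (fun n => inner ℂ (v n) z : ℕ → ℂ) 𝒰 (𝓝 (inner ℂ w0 z)) := by
    intro z
    have hcont : Continuous fun ψ : WeakDual ℂ H => ψ z := WeakDual.eval_continuous z
    have := (hcont.tendsto φ).comp hφlim
    have heq : (fun ψ : WeakDual ℂ H => ψ z) ∘ (fun n => (D (v n) : WeakDual ℂ H)) =
        fun n => inner ℂ (v n) z := by
      funext n; rfl
    rw [heq] at this
    have hφz : φ z = inner ℂ w0 z := by
      have : D w0 = WeakDual.toStrongDual φ := by simp [hw0]
      calc φ z = (WeakDual.toStrongDual φ) z := rfl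
        _ = (D w0) z := by rw [this]
        _ = inner ℂ w0 z := by simp [hD, InnerProductSpace.toDual_apply_apply]
    rwa [hφz] at this
  -- norm limit point
  have hK : IsCompact (closure (⇑T '' closedBall 0 1)) :=
    IsCompactOperator.isCompact_closure_image_closedBall (f := (T : H →ₗ[ℂ] H)) hT 1
  have hmem2 : closure (⇑T '' closedBall 0 1) ∈ Ultrafilter.map (fun n => T (v n)) 𝒰 := by
    refine Ultrafilter.mem_map.2 (Filter.univ_mem' (fun m => ?_))
    exact subset_closure ⟨v m, by simpa using hv1 m, rfl⟩
  obtain ⟨w, hwmem, hwlim⟩ := hK.ultrafilter_le_nhds (Ultrafilter.map (fun n => T (v n)) 𝒰) (le_principal_iff.2 hmem2)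
  have hwlim' : Tendsto (fun n => T (v n)) 𝒰 (𝓝 w) := hwlim
  have hnorm : ‖w‖ = ‖T‖ := by
    have h1 : Tendsto (fun n => ‖T (v n)‖) 𝒰 (𝓝 ‖w‖) := (continuous_norm.tendsto w).comp hwlim'
    have h2 : Tendsto (fun n => ‖T (v n)‖) 𝒰 (𝓝 ‖T‖) := hlim.mono_left h𝒰
    exact tendsto_nhds_unique h1 h2
  have hTw0 : T w0 = w := by
    refine ext_inner_right ℂ fun z => ?_
    have h1 : Tendsto (fun n => (inner ℂ (T (v n)) z : ℂ)) 𝒰 (𝓝 (inner ℂ w z)) :=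
      (hwlim'.inner tendsto_const_nhds)
    have h2 : Tendsto (fun n => (inner ℂ (T (v n)) z : ℂ)) 𝒰 (𝓝 (inner ℂ (T w0) z)) := by
      have := hweak ((ContinuousLinearMap.adjoint T) z)
      simp only [ContinuousLinearMap.adjoint_inner_right] at this
      exact this
    exact (tendsto_nhds_unique h2 h1)
  exact ⟨w0, hw0norm, by rw [hTw0, hnorm]⟩

lemma proj_apply_norm_le {H : Type*} [NormedAddCommGroup H] [InnerProductSpace ℂ H]
    [CompleteSpace H] {q : H →L[ℂ] H} (hqsa : IsSelfAdjoint q) (hqidem : q * q = q) (v : H) :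
    ‖q v‖ ≤ ‖v‖ := by
  have hadj : ContinuousLinearMap.adjoint q = q := hqsa
  have h1 : (inner ℂ (q v) (q v) : ℂ) = inner ℂ v (q v) := by
    rw [← ContinuousLinearMap.adjoint_inner_right q, hadj,
      ← ContinuousLinearMap.mul_apply, hqidem]
  have h2 : ‖q v‖ ^ 2 = RCLike.re (inner ℂ v (q v) : ℂ) := by
    rw [← h1, inner_self_eq_norm_sq]
  have h3 : RCLike.re (inner ℂ v (q v) : ℂ) ≤ ‖v‖ * ‖q v‖ := by
    calc RCLike.re (inner ℂ v (q v) : ℂ) ≤ ‖(inner ℂ v (q v) : ℂ)‖ := RCLike.re_le_norm _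
      _ ≤ ‖v‖ * ‖q v‖ := norm_inner_le_norm _ _
  nlinarith [norm_nonneg (q v), norm_nonneg v]


/-- The pinching operator associated with a family of mutually orthogonal projections. -/
noncomputable def pinch {H : Type*} [NormedAddCommGroup H] [InnerProductSpace ℂ H]
    (p : ℕ → H →L[ℂ] H) (x : H →L[ℂ] H) : H →L[ℂ] H :=
  ∑' i, p i * x * p i

/-- For a compact `x`, an index `i` with `p i ≠ 0` and an orthogonal projection
`q` with `q * p i = 0`, there is an operator `y` of rank at most one with `‖y‖ ≤ 1` such that
`‖x * P y - P (x * y)‖ ≥ ‖p i * x * q‖`. -/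
theorem pinching_commutator_lower_bound
    {H : Type*} [NormedAddCommGroup H] [InnerProductSpace ℂ H] [CompleteSpace H]
    [TopologicalSpace.SeparableSpace H]
    (hinf : ¬ FiniteDimensional ℂ H)
    (p : ℕ → H →L[ℂ] H)
    (hsa : ∀ i, IsSelfAdjoint (p i))
    (hidem : ∀ i, p i * p i = p i)
    (horth : ∀ i j, i ≠ j → p i * p j = 0)
    (x : H →L[ℂ] H) (hx : IsCompactOperator ⇑x)
    (i : ℕ) (hpi : p i ≠ 0)
    (q : H →L[ℂ] H) (hqsa : IsSelfAdjoint q) (hqidem : q * q = q) (hqp : q * p i = 0) :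
    ∃ y : H →L[ℂ] H, Module.rank ℂ ↥(LinearMap.range (y : H →ₗ[ℂ] H)) ≤ 1 ∧ ‖y‖ ≤ 1 ∧
      ‖p i * x * q‖ ≤ ‖x * pinch p y - pinch p (x * y)‖ := by
  classical
  -- the compact operator p i * x * q attains its norm
  set T : H →L[ℂ] H := p i * x * q with hT
  have hTcomp : IsCompactOperator ⇑T :=
    (IsCompactOperator.continuous_comp (hx.comp_clm q) (p i).continuous : _)
  obtain ⟨v, hv1, hv2⟩ := compact_norm_attained T hTcomp
  set w : H := q v with hw
  -- a unit vector in the range of p i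
  obtain ⟨z, hz⟩ : ∃ z, p i z ≠ 0 := by
    by_contra h
    push_neg at h
    exact hpi (ContinuousLinearMap.ext fun z => by simp [h z])
  set u : H := ((‖p i z‖ : ℂ))⁻¹ • p i z with hu
  have hzn : (‖p i z‖ : ℝ) ≠ 0 := norm_ne_zero_iff.2 hz
  have hu1 : ‖u‖ = 1 := by
    rw [hu, norm_smul]
    simp [norm_inv, hzn]
  have hu2 : p i u = u := by
    rw [hu, map_smul, ← ContinuousLinearMap.mul_apply, hidem]
  -- p i * q = 0
  have hpq : p i * q = 0 := by
    have := congrArg star hqp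
    rwa [star_mul, (hsa i).star_eq, hqsa.star_eq, star_zero] at this
  have hpiw : p i w = 0 := by
    rw [hw, ← ContinuousLinearMap.mul_apply, hpq]; rfl
  -- the rank one operator
  set y : H →L[ℂ] H := (innerSL ℂ u).smulRight w with hy
  have hyapp : ∀ ξ, y ξ = (inner ℂ u ξ : ℂ) • w := fun ξ => rfl
  -- inner products with u kill p j for j ≠ i
  have hinner : ∀ j, j ≠ i → ∀ ξ : H, (inner ℂ u (p j ξ) : ℂ) = 0 := by
    intro j hj ξ
    have hadj : ContinuousLinearMap.adjoint (p j) = p j := hsa j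
    calc (inner ℂ u (p j ξ) : ℂ) = inner ℂ (p j u) ξ := by
          rw [← ContinuousLinearMap.adjoint_inner_left, hadj]
      _ = inner ℂ (p j (p i u)) ξ := by rw [hu2]
      _ = 0 := by
          rw [← ContinuousLinearMap.mul_apply, horth j i (fun h => hj h)]
          simp
  -- pinch p y = 0
  have hpy : pinch p y = 0 := by
    have hterm : ∀ j, p j * y * p j = 0 := by
      intro j
      ext ξ
      show p j (y (p j ξ)) = 0
      rw [hyapp, map_smul]
      by_cases hj : j = i
      · subst hj; rw [hpiw, smul_zero]
      · rw [hinner j hj, zero_smul]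
    rw [pinch, funext hterm, tsum_zero]
  -- pinch p (x * y) = p i * (x * y) * p i
  have hpxy : pinch p (x * y) = p i * (x * y) * p i := by
    rw [pinch]
    refine tsum_eq_single i (fun j hj => ?_)
    ext ξ
    show p j ((x * y) (p j ξ)) = 0
    show p j (x (y (p j ξ))) = 0
    rw [hyapp, hinner j hj, zero_smul, map_zero, map_zero]
  -- evaluate the remaining operator at u
  have happ : (p i * (x * y) * p i) u = p i (x w) := by
    show p i (x (y (p i u))) = p i (x w)
    rw [hu2, hyapp]
    have : (inner ℂ u u : ℂ) = 1 := by
      rw [inner_self_eq_norm_sq_to_K, hu1]; norm_num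
    rw [this, one_smul]
  refine ⟨y, ?_, ?_, ?_⟩
  · -- rank at most one
    have hle : LinearMap.range (y : H →ₗ[ℂ] H) ≤ ℂ ∙ w := by
      rintro _ ⟨ξ, rfl⟩
      exact Submodule.smul_mem _ _ (Submodule.mem_span_singleton_self w)
    calc Module.rank ℂ ↥(LinearMap.range (y : H →ₗ[ℂ] H)) ≤ Module.rank ℂ ↥(ℂ ∙ w) :=
          Submodule.rank_mono hle
      _ ≤ 1 := by simpa using rank_span_le (R := ℂ) ({w} : Set H)
  · -- norm at most one
    have : ‖y‖ = ‖innerSL ℂ u‖ * ‖w‖ := ContinuousLinearMap.norm_smulRight_apply _ _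
    rw [this, innerSL_apply_norm, hu1, one_mul, hw]
    exact (proj_apply_norm_le hqsa hqidem v).trans hv1
  · -- the norm bound
    rw [hpy, mul_zero, zero_sub, norm_neg, hpxy]
    calc ‖p i * x * q‖ ≤ ‖T v‖ := hv2
      _ = ‖(p i * (x * y) * p i) u‖ := by rw [happ]; rfl
      _ ≤ ‖p i * (x * y) * p i‖ * ‖u‖ := ContinuousLinearMap.le_opNorm _ _
      _ = ‖p i * (x * y) * p i‖ := by rw [hu1, mul_one]
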